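/- Let L be a free ℤ-module of finite rank m, λ: L → ℝ a group homomorphism, and R an integral domain. Define v_λ on the group algebra R[L] by v_λ(Σ c_z · z) = min{λ(z) : c_z ≠ 0}. If λ is irrational, i.e., L ∩ ker(λ) = {0}, then v_λ(x·y) = v_λ(x) + v_λ(y) for all nonzero x, y ∈ R[L]; in particular R[L] is an integral domain. -/

import Mathlib

open scoped Classical

/-- The valuation `v_λ` on the group algebra `R[L]`:
`v_λ(Σ c_z · z) = min {λ(z) : c_z ≠ 0}`, with value `⊤` on `0`. -/
noncomputable def vlam {R L : Type*} [Semiring R] [AddCommGroup L]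
    (lam : L →+ ℝ) (x : AddMonoidAlgebra R L) : WithTop ℝ :=
  x.coeff.support.inf fun z => ((lam z : ℝ) : WithTop ℝ)

section aux
variable {R L : Type*} [CommRing R] [IsDomain R] [AddCommGroup L]

omit [IsDomain R] in
lemma coeff_min (lam : L →+ ℝ) (hlam : Function.Injective lam)
    (x y : AddMonoidAlgebra R L) (a b : L) (hb : b ∈ y.coeff.support)
    (hma : ∀ p ∈ x.coeff.support, lam a ≤ lam p) (hmb : ∀ q ∈ y.coeff.support, lam b ≤ lam q) :
    (x * y).coeff (a + b) = x.coeff a * y.coeff b := by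
  rw [AddMonoidAlgebra.coeff_mul]
  rw [Finsupp.sum]
  rw [Finset.sum_eq_single a]
  · rw [Finsupp.sum, Finset.sum_eq_single b]
    · simp
    · intro q hq hqb
      have : ¬ (a + q = a + b) := by
        intro h; exact hqb (by exact add_left_cancel h)
      simp [this]
    · intro hbads; simp [Finsupp.notMem_support_iff.mp hbads]
  · intro p hp hpa
    rw [Finsupp.sum]
    apply Finset.sum_eq_zero
    intro q hq
    have : ¬ (p + q = a + b) := by
      intro h
      have hlq : lam p + lam q = lam a + lam b := by
        have := congrArg lam h; simpa [map_add] using this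
      have h1 := hma p hp
      have h2 := hmb q hq
      have : lam p = lam a := by linarith
      exact hpa (hlam this)
    simp [this]
  · intro habs; simp [Finsupp.notMem_support_iff.mp habs]

end aux

/-- For `L` a free `ℤ`-module of finite rank, `R` an integral domain, and `λ : L → ℝ`
an irrational (i.e. injective) homomorphism, `v_λ` is multiplicative on nonzero
elements of `R[L]`; in particular `R[L]` is an integral domain. -/
theorem stmt_3 {R L : Type*} [CommRing R] [IsDomain R] [AddCommGroup L]
    [Module.Free ℤ L] [Module.Finite ℤ L] (lam : L →+ ℝ)
    (hlam : Function.Injective lam) :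
    (∀ x y : AddMonoidAlgebra R L, x ≠ 0 → y ≠ 0 →
      vlam lam (x * y) = vlam lam x + vlam lam y) ∧
    (∀ x y : AddMonoidAlgebra R L, x * y = 0 → x = 0 ∨ y = 0) := by
  have main : ∀ x y : AddMonoidAlgebra R L, x ≠ 0 → y ≠ 0 →
      vlam lam (x * y) = vlam lam x + vlam lam y ∧ x * y ≠ 0 := by
    intro x y hx hy
    have hxs : x.coeff.support.Nonempty := Finsupp.support_nonempty_iff.mpr (mt AddMonoidAlgebra.coeff_eq_zero.mp hx)
    have hys : y.coeff.support.Nonempty := Finsupp.support_nonempty_iff.mpr (mt AddMonoidAlgebra.coeff_eq_zero.mp hy)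
    obtain ⟨a, ha, hma⟩ := Finset.exists_min_image x.coeff.support (fun z => lam z) hxs
    obtain ⟨b, hb, hmb⟩ := Finset.exists_min_image y.coeff.support (fun z => lam z) hys
    have hcoef : (x * y).coeff (a + b) = x.coeff a * y.coeff b :=
      coeff_min lam hlam x y a b hb hma hmb
    have hne : (x * y).coeff (a + b) ≠ 0 := by
      rw [hcoef]
      exact mul_ne_zero (Finsupp.mem_support_iff.mp ha) (Finsupp.mem_support_iff.mp hb)
    have hmem : a + b ∈ (x * y).coeff.support := Finsupp.mem_support_iff.mpr hne
    have hvx : vlam lam x = ((lam a : ℝ) : WithTop ℝ) := by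
      apply le_antisymm (Finset.inf_le ha)
      exact Finset.le_inf fun p hp => by exact_mod_cast hma p hp
    have hvy : vlam lam y = ((lam b : ℝ) : WithTop ℝ) := by
      apply le_antisymm (Finset.inf_le hb)
      exact Finset.le_inf fun q hq => by exact_mod_cast hmb q hq
    constructor
    · rw [hvx, hvy]
      apply le_antisymm
      · calc vlam lam (x * y) ≤ ((lam (a + b) : ℝ) : WithTop ℝ) := Finset.inf_le hmem
          _ = _ := by rw [map_add]; push_cast; ring
      · apply Finset.le_inf
        intro z hz
        obtain ⟨p, hp, q, hq, rfl⟩ := Finset.mem_add.mp (AddMonoidAlgebra.support_coeff_mul_subset x y hz)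
        have h1 := hma p hp
        have h2 := hmb q hq
        rw [← WithTop.coe_add]
        exact_mod_cast (by rw [map_add]; linarith : lam a + lam b ≤ lam (p + q))
    · intro h0
      rw [h0] at hne; simp at hne
  refine ⟨fun x y hx hy => (main x y hx hy).1, fun x y hxy => ?_⟩
  by_contra h
  push_neg at h
  exact (main x y h.1 h.2).2 hxy
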